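/- Let ℓ > 0 and let z ∈ ℂ with Im z > 0. Then the integrals below are well defined, the denominators are nonzero, and ((z−i)/(z+i)) · e^{ℓ} · (∫₀^ℓ e^{(−iz−1)x} dx) / (∫₀^ℓ e^{(−iz+1)x} dx) = (e^{iℓz} − e^{−ℓ}) / (e^{−ℓ} e^{iℓz} − 1). (This is the Livšic function of the symmetric first-order differentiation operator on (0, ℓ) with Dirichlet conditions at both endpoints relative to the antiperiodic self-adjoint extension.) -/

import Mathlib

open intervalIntegral

/-- The Livšic function of the differentiation operator on `(0, ℓ)`:
for `ℓ > 0` and `Im z > 0`,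
`((z−i)/(z+i)) e^{ℓ} (∫₀^ℓ e^{(−iz−1)x} dx)/(∫₀^ℓ e^{(−iz+1)x} dx)
  = (e^{iℓz} − e^{−ℓ})/(e^{−ℓ} e^{iℓz} − 1)`. -/
theorem statement18 (l : ℝ) (hl : 0 < l) (z : ℂ) (hz : 0 < z.im) :
    IntervalIntegrable (fun x : ℝ => Complex.exp ((-Complex.I * z - 1) * x))
      MeasureTheory.volume 0 l ∧
    IntervalIntegrable (fun x : ℝ => Complex.exp ((-Complex.I * z + 1) * x))
      MeasureTheory.volume 0 l ∧
    z + Complex.I ≠ 0 ∧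
    (∫ x : ℝ in (0 : ℝ)..l, Complex.exp ((-Complex.I * z + 1) * x)) ≠ 0 ∧
    Complex.exp (-(l : ℂ)) * Complex.exp (Complex.I * l * z) - 1 ≠ 0 ∧
    (z - Complex.I) / (z + Complex.I) * (Real.exp l : ℂ) *
        ((∫ x : ℝ in (0 : ℝ)..l, Complex.exp ((-Complex.I * z - 1) * x)) /
          (∫ x : ℝ in (0 : ℝ)..l, Complex.exp ((-Complex.I * z + 1) * x))) =
      (Complex.exp (Complex.I * l * z) - Complex.exp (-(l : ℂ))) /
        (Complex.exp (-(l : ℂ)) * Complex.exp (Complex.I * l * z) - 1) := by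
  have hzi : z + Complex.I ≠ 0 := by
    intro h
    have := congrArg Complex.im h
    simp at this
    linarith
  have ha2 : (-Complex.I * z + 1 : ℂ) ≠ 0 := by
    intro h
    have := congrArg Complex.re h
    simp [Complex.add_re, Complex.mul_re] at this
    linarith
  have hi1 : IntervalIntegrable (fun x : ℝ => Complex.exp ((-Complex.I * z - 1) * x))
      MeasureTheory.volume 0 l := by
    apply Continuous.intervalIntegrable; fun_prop
  have hi2 : IntervalIntegrable (fun x : ℝ => Complex.exp ((-Complex.I * z + 1) * x))
      MeasureTheory.volume 0 l := by
    apply Continuous.intervalIntegrable; fun_prop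
  have hre2 : ((-Complex.I * z + 1) * (l : ℂ)).re = (z.im + 1) * l := by
    simp [Complex.mul_re, Complex.add_re, Complex.add_im]
  have hexp2 : Complex.exp ((-Complex.I * z + 1) * (l : ℂ)) ≠ 1 := by
    intro h
    have := congrArg (‖·‖) h
    rw [Complex.norm_exp] at this
    simp [hre2] at this
    rcases this with h' | h' <;> linarith
  have hI2 : (∫ x : ℝ in (0 : ℝ)..l, Complex.exp ((-Complex.I * z + 1) * x)) =
      (Complex.exp ((-Complex.I * z + 1) * l) - 1) / (-Complex.I * z + 1) := by
    rw [integral_exp_mul_complex ha2]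
    simp
  have hI2ne : (∫ x : ℝ in (0 : ℝ)..l, Complex.exp ((-Complex.I * z + 1) * x)) ≠ 0 := by
    rw [hI2]
    exact div_ne_zero (sub_ne_zero.mpr hexp2) ha2
  have hD : Complex.exp (-(l : ℂ)) * Complex.exp (Complex.I * l * z) - 1 ≠ 0 := by
    intro h
    have h' : Complex.exp (-(l : ℂ) + Complex.I * l * z) = 1 := by
      rw [Complex.exp_add]; linear_combination h
    have := congrArg (‖·‖) h'
    rw [Complex.norm_exp] at this
    simp [Complex.add_re, Complex.mul_re] at this
    nlinarith
  refine ⟨hi1, hi2, hzi, hI2ne, hD, ?_⟩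
  by_cases hzI : z = Complex.I
  · subst hzI
    have hil : Complex.I * (l : ℂ) * Complex.I = -(l : ℂ) := by
      rw [mul_right_comm, Complex.I_mul_I]; ring
    simp [hil]
  · have hzmi : z - Complex.I ≠ 0 := sub_ne_zero.mpr hzI
    have ha1 : (-Complex.I * z - 1 : ℂ) ≠ 0 := by
      have : (-Complex.I * z - 1 : ℂ) = -Complex.I * (z - Complex.I) := by
        rw [mul_sub]; simp [Complex.I_mul_I]
      rw [this]
      exact mul_ne_zero (neg_ne_zero.mpr Complex.I_ne_zero) hzmi
    have hI1 : (∫ x : ℝ in (0 : ℝ)..l, Complex.exp ((-Complex.I * z - 1) * x)) =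
        (Complex.exp ((-Complex.I * z - 1) * l) - 1) / (-Complex.I * z - 1) := by
      rw [integral_exp_mul_complex ha1]
      simp
    rw [hI1, hI2]
    set u := Complex.exp (Complex.I * l * z) with hu
    set E := Complex.exp (l : ℂ) with hE
    have hune : u ≠ 0 := Complex.exp_ne_zero _
    have hEne : E ≠ 0 := Complex.exp_ne_zero _
    have he1 : Complex.exp ((-Complex.I * z - 1) * (l : ℂ)) = u⁻¹ * E⁻¹ := by
      rw [hu, hE, ← Complex.exp_neg, ← Complex.exp_neg, ← Complex.exp_add]
      ring_nf
    have he2 : Complex.exp ((-Complex.I * z + 1) * (l : ℂ)) = u⁻¹ * E := by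
      rw [hu, hE, ← Complex.exp_neg, ← Complex.exp_add]
      ring_nf
    have heneg : Complex.exp (-(l : ℂ)) = E⁻¹ := by rw [hE, ← Complex.exp_neg]
    have hRe : (Real.exp l : ℂ) = E := by rw [hE, Complex.ofReal_exp]
    have hnum2 : u⁻¹ * E - 1 ≠ 0 := by
      rw [← he2]; exact sub_ne_zero.mpr hexp2
    rw [he1, he2, heneg, hRe]
    rw [heneg] at hD
    have hfac1 : (-Complex.I * z - 1 : ℂ) = -Complex.I * (z - Complex.I) := by
      rw [mul_sub]; simp [Complex.I_mul_I]
    have hfac2 : (-Complex.I * z + 1 : ℂ) = -Complex.I * (z + Complex.I) := by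
      rw [mul_add]; simp [Complex.I_mul_I]
    have hBne : u⁻¹ * E - 1 ≠ 0 := hnum2
    rw [hfac1, hfac2]
    have hstep : (z - Complex.I) / (z + Complex.I) * E *
        ((u⁻¹ * E⁻¹ - 1) / (-Complex.I * (z - Complex.I)) /
          ((u⁻¹ * E - 1) / (-Complex.I * (z + Complex.I)))) =
        E * (u⁻¹ * E⁻¹ - 1) / (u⁻¹ * E - 1) := by
      have hx : (z - Complex.I) / (z + Complex.I) ≠ 0 := div_ne_zero hzmi hzi
      rw [div_div_div_comm, mul_div_mul_left _ _ (neg_ne_zero.mpr Complex.I_ne_zero),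
        mul_comm ((z - Complex.I) / (z + Complex.I)) E, mul_assoc, mul_div_assoc',
        mul_div_cancel_left₀ _ hx, mul_div_assoc]
    rw [hstep, div_eq_div_iff hBne hD]
    field_simp
    ring
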